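/- With the seven matrices t₁, …, t₇ and the componentwise partial order ≤ as defined, every infinite nondecreasing sequence σ₁ ≤ σ₂ ≤ ⋯ of elements of {t₂, t₃, t₄, t₅, t₆, t₇} is, for some i, j, k ∈ ω, of exactly one of the following forms: t₂^∞; t₂^i t₃^∞; t₂^i t₃^j t₄^∞; t₂^i t₃^j t₄^k t₇^∞; t₂^i t₅^∞; t₂^i t₅^j t₆^∞; t₂^i t₅^j t₆^k t₇^∞ (where T^m denotes m consecutive repetitions of T and T^∞ denotes infinite repetition). Conversely, every sequence of one of these forms is nondecreasing. -/
import Mathlib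


inductive Typ where
  | A | B | C | D | E
deriving DecidableEq

/-- Position in the linear order α ≺ β ≺ γ ≺ δ ≺ ε. -/
def Typ.ord : Typ → ℕ
  | .A => 0
  | .B => 1
  | .C => 2
  | .D => 3
  | .E => 4

open Typ in
def t2 : Fin 3 → Fin 3 → Typ := ![![C, E, E], ![A, A, A], ![A, A, A]]
open Typ in
def t3 : Fin 3 → Fin 3 → Typ := ![![C, E, E], ![B, C, E], ![A, A, A]]
open Typ in
def t4 : Fin 3 → Fin 3 → Typ := ![![C, E, E], ![C, C, E], ![A, A, A]]
open Typ in
def t5 : Fin 3 → Fin 3 → Typ := ![![C, E, E], ![C, C, C], ![C, C, C]]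
open Typ in
def t6 : Fin 3 → Fin 3 → Typ := ![![C, E, E], ![C, C, D], ![C, C, C]]
open Typ in
def t7 : Fin 3 → Fin 3 → Typ := ![![C, E, E], ![C, C, E], ![C, C, C]]

/-- Componentwise order of matrices over {α, β, γ, δ, ε}. -/
def matLe (M N : Fin 3 → Fin 3 → Typ) : Prop :=
  ∀ i j : Fin 3, (M i j).ord ≤ (N i j).ord

/-- The sequence `a^i b^j c^k d^∞`: `i` copies of `a`, then `j` copies of `b`,
then `k` copies of `c`, then `d` forever. -/
def stepSeq (a b c d : Fin 3 → Fin 3 → Typ) (i j k : ℕ) : ℕ → (Fin 3 → Fin 3 → Typ) :=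
  fun n => if n < i then a else if n < i + j then b else if n < i + j + k then c else d

/-- The forms `t₂^∞`, `t₂^i t₃^∞`, `t₂^i t₃^j t₄^∞`, `t₂^i t₃^j t₄^k t₇^∞`,
`t₂^i t₅^∞`, `t₂^i t₅^j t₆^∞`, `t₂^i t₅^j t₆^k t₇^∞`. -/
def isDeltaForm (σ : ℕ → (Fin 3 → Fin 3 → Typ)) : Prop :=
  (∀ n, σ n = t2) ∨
  (∃ i, σ = stepSeq t2 t3 t3 t3 i 0 0) ∨
  (∃ i j, σ = stepSeq t2 t3 t4 t4 i j 0) ∨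
  (∃ i j k, σ = stepSeq t2 t3 t4 t7 i j k) ∨
  (∃ i, σ = stepSeq t2 t5 t5 t5 i 0 0) ∨
  (∃ i j, σ = stepSeq t2 t5 t6 t6 i j 0) ∨
  (∃ i j k, σ = stepSeq t2 t5 t6 t7 i j k)

-- auxiliary block to be inserted
instance matLe.dec (M N : Fin 3 → Fin 3 → Typ) : Decidable (matLe M N) := by
  unfold matLe; infer_instance

lemma matLe_refl (M : Fin 3 → Fin 3 → Typ) : matLe M M := fun _ _ => le_refl _

abbrev TL : List (Fin 3 → Fin 3 → Typ) := [t2, t3, t4, t5, t6, t7]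

lemma pred_t2 : ∀ x ∈ TL, matLe x t2 → x = t2 := by decide

lemma up34 : ∀ x ∈ [t3, t4, t7], ∀ y ∈ TL, matLe x y → y ∈ [t3, t4, t7] := by decide
lemma up56 : ∀ x ∈ [t5, t6, t7], ∀ y ∈ TL, matLe x y → y ∈ [t5, t6, t7] := by decide
lemma up4 : ∀ x ∈ [t4, t7], ∀ y ∈ TL, matLe x y → y ∈ [t4, t7] := by decide
lemma up6 : ∀ x ∈ [t6, t7], ∀ y ∈ TL, matLe x y → y ∈ [t6, t7] := by decide
lemma up7 : ∀ x ∈ [t7], ∀ y ∈ TL, matLe x y → y ∈ [t7] := by decide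

/-- upward closure -/
lemma upClosed {σ : ℕ → (Fin 3 → Fin 3 → Typ)}
    (hS : ∀ n, σ n ∈ TL) (hM : ∀ n, matLe (σ n) (σ (n + 1)))
    (T : List (Fin 3 → Fin 3 → Typ))
    (hT : ∀ x ∈ T, ∀ y ∈ TL, matLe x y → y ∈ T)
    (i : ℕ) (hi : σ i ∈ T) : ∀ n, i ≤ n → σ n ∈ T := by
  intro n hn
  induction n, hn using Nat.le_induction with
  | base => exact hi
  | succ n hn ih => exact hT _ ih _ (hS _) (hM n)

lemma chainForm {σ : ℕ → (Fin 3 → Fin 3 → Typ)}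
    (hS : ∀ n, σ n ∈ TL) (hM : ∀ n, matLe (σ n) (σ (n + 1)))
    (b c : Fin 3 → Fin 3 → Typ) (i : ℕ)
    (h2 : ∀ n, n < i → σ n = t2)
    (hcl : ∀ n, i ≤ n → σ n ∈ [b, c, t7])
    (hupc : ∀ x ∈ [c, t7], ∀ y ∈ TL, matLe x y → y ∈ [c, t7]) :
    (σ = stepSeq t2 b b b i 0 0) ∨ (∃ j, σ = stepSeq t2 b c c i j 0) ∨
      (∃ j k, σ = stepSeq t2 b c t7 i j k) := by
  by_cases hb : ∀ n, i ≤ n → σ n = b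
  · left
    funext n
    unfold stepSeq
    split_ifs with h1 h2' h3'
    · exact h2 n h1
    all_goals exact hb n (by omega)
  · push_neg at hb
    have hex : ∃ m, i ≤ m ∧ σ m ≠ b := hb
    set m := Nat.find hex with hmdef
    obtain ⟨him, hmb⟩ := Nat.find_spec hex
    have hmin : ∀ n, i ≤ n → n < m → σ n = b := by
      intro n hn hlt
      by_contra hne
      have : m ≤ n := Nat.find_le ⟨hn, hne⟩
      omega
    have hmc : σ m ∈ [c, t7] := by
      have := hcl m him
      simp only [List.mem_cons, List.not_mem_nil, or_false] at this ⊢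
      tauto
    have hclc : ∀ n, m ≤ n → σ n ∈ [c, t7] := upClosed hS hM _ hupc m hmc
    by_cases hc : ∀ n, m ≤ n → σ n = c
    · right; left
      refine ⟨m - i, ?_⟩
      funext n
      unfold stepSeq
      split_ifs with h1 h2' h3'
      · exact h2 n h1
      · exact hmin n (by omega) (by omega)
      all_goals exact hc n (by omega)
    · push_neg at hc
      have hex2 : ∃ p, m ≤ p ∧ σ p ≠ c := hc
      set p := Nat.find hex2 with hpdef
      obtain ⟨hmp, hpc⟩ := Nat.find_spec hex2
      have hmin2 : ∀ n, m ≤ n → n < p → σ n = c := by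
        intro n hn hlt
        by_contra hne
        have : p ≤ n := Nat.find_le ⟨hn, hne⟩
        omega
      have hp7 : σ p ∈ [t7] := by
        have := hclc p hmp
        simp only [List.mem_cons, List.not_mem_nil, or_false] at this ⊢
        tauto
      have hcl7 : ∀ n, p ≤ n → σ n = t7 := by
        intro n hn
        have := upClosed hS hM _ up7 p hp7 n hn
        simpa using this
      right; right
      refine ⟨m - i, p - m, ?_⟩
      funext n
      unfold stepSeq
      split_ifs with h1 h2' h3'
      · exact h2 n h1
      · exact hmin n (by omega) (by omega)
      · exact hmin2 n (by omega) (by omega)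
      · exact hcl7 n (by omega)

lemma stepSeq_mem (a b c d : Fin 3 → Fin 3 → Typ)
    (ha : a ∈ TL) (hb : b ∈ TL) (hc : c ∈ TL) (hd : d ∈ TL)
    (i j k n : ℕ) : stepSeq a b c d i j k n ∈ TL := by
  unfold stepSeq; split_ifs <;> assumption

lemma stepSeq_mono (a b c d : Fin 3 → Fin 3 → Typ)
    (hab : matLe a b) (hac : matLe a c) (had : matLe a d)
    (hbc : matLe b c) (hbd : matLe b d) (hcd : matLe c d)
    (i j k n : ℕ) :
    matLe (stepSeq a b c d i j k n) (stepSeq a b c d i j k (n + 1)) := by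
  unfold stepSeq
  split_ifs <;> first | exact matLe_refl _ | assumption | omega

/-- An infinite nondecreasing sequence over `{t₂, …, t₇}` is of one of the
seven forms listed in `isDeltaForm`, and conversely every sequence of one of
these forms is nondecreasing (with values in `{t₂, …, t₇}`). -/
theorem stmt16 :
    (∀ σ : ℕ → (Fin 3 → Fin 3 → Typ),
      (∀ n, σ n ∈ [t2, t3, t4, t5, t6, t7]) →
      (∀ n, matLe (σ n) (σ (n + 1))) →
      isDeltaForm σ) ∧
    (∀ σ : ℕ → (Fin 3 → Fin 3 → Typ), isDeltaForm σ →
      (∀ n, σ n ∈ [t2, t3, t4, t5, t6, t7]) ∧ (∀ n, matLe (σ n) (σ (n + 1)))) := by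
  constructor
  · intro σ hS hM
    by_cases h2 : ∀ n, σ n = t2
    · exact Or.inl h2
    · push_neg at h2
      set i := Nat.find h2 with hidef
      have hi : σ i ≠ t2 := Nat.find_spec h2
      have hlt : ∀ n, n < i → σ n = t2 := by
        intro n hn
        by_contra hne
        have : i ≤ n := Nat.find_le hne
        omega
      have hSi := hS i
      simp only [List.mem_cons, List.not_mem_nil, or_false] at hSi
      rcases hSi with h | h | h | h | h | h
      · exact absurd h hi
      · have hcl := upClosed hS hM [t3, t4, t7] up34 i (by rw [h]; decide)
        rcases chainForm hS hM t3 t4 i hlt hcl up4 with h' | h' | h'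
        · exact Or.inr (Or.inl ⟨i, h'⟩)
        · exact Or.inr (Or.inr (Or.inl ⟨i, h'⟩))
        · obtain ⟨j, k, h'⟩ := h'
          exact Or.inr (Or.inr (Or.inr (Or.inl ⟨i, j, k, h'⟩)))
      · have hcl := upClosed hS hM [t3, t4, t7] up34 i (by rw [h]; decide)
        rcases chainForm hS hM t3 t4 i hlt hcl up4 with h' | h' | h'
        · exact Or.inr (Or.inl ⟨i, h'⟩)
        · exact Or.inr (Or.inr (Or.inl ⟨i, h'⟩))
        · obtain ⟨j, k, h'⟩ := h'
          exact Or.inr (Or.inr (Or.inr (Or.inl ⟨i, j, k, h'⟩)))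
      · have hcl := upClosed hS hM [t5, t6, t7] up56 i (by rw [h]; decide)
        rcases chainForm hS hM t5 t6 i hlt hcl up6 with h' | h' | h'
        · exact Or.inr (Or.inr (Or.inr (Or.inr (Or.inl ⟨i, h'⟩))))
        · exact Or.inr (Or.inr (Or.inr (Or.inr (Or.inr (Or.inl ⟨i, h'⟩)))))
        · obtain ⟨j, k, h'⟩ := h'
          exact Or.inr (Or.inr (Or.inr (Or.inr (Or.inr (Or.inr ⟨i, j, k, h'⟩)))))
      · have hcl := upClosed hS hM [t5, t6, t7] up56 i (by rw [h]; decide)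
        rcases chainForm hS hM t5 t6 i hlt hcl up6 with h' | h' | h'
        · exact Or.inr (Or.inr (Or.inr (Or.inr (Or.inl ⟨i, h'⟩))))
        · exact Or.inr (Or.inr (Or.inr (Or.inr (Or.inr (Or.inl ⟨i, h'⟩)))))
        · obtain ⟨j, k, h'⟩ := h'
          exact Or.inr (Or.inr (Or.inr (Or.inr (Or.inr (Or.inr ⟨i, j, k, h'⟩)))))
      · have hcl := upClosed hS hM [t3, t4, t7] up34 i (by rw [h]; decide)
        rcases chainForm hS hM t3 t4 i hlt hcl up4 with h' | h' | h'
        · exact Or.inr (Or.inl ⟨i, h'⟩)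
        · exact Or.inr (Or.inr (Or.inl ⟨i, h'⟩))
        · obtain ⟨j, k, h'⟩ := h'
          exact Or.inr (Or.inr (Or.inr (Or.inl ⟨i, j, k, h'⟩)))
  · intro σ hF
    rcases hF with h | ⟨i, h⟩ | ⟨i, j, h⟩ | ⟨i, j, k, h⟩ | ⟨i, h⟩ | ⟨i, j, h⟩ | ⟨i, j, k, h⟩
    · constructor
      · intro n; rw [h n]; decide
      · intro n; rw [h n, h (n + 1)]; exact matLe_refl _
    all_goals subst h
    all_goals exact ⟨fun n => stepSeq_mem _ _ _ _ (by decide) (by decide) (by decide) (by decide) _ _ _ _,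
      fun n => stepSeq_mono _ _ _ _ (by decide) (by decide) (by decide) (by decide) (by decide) (by decide) _ _ _ _⟩
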